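/- For 0 ≤ d ≤ n-1, the map ρ_{n,d} defined by γ'NE D^j NNEE γ'' ↦ γ'NDE D^j NE γ'' and D^j NNEE γ' NE NE ↦ D^j NNEE γ' D NE is a bijection from the set of area-1 Schröder paths with d diagonal steps of the form {γ = D^j NNEE γ' NE NE or γ = γ' NE D^j NNEE γ''} onto the corresponding set with d+1 diagonal steps {γ = D^j NNEE γ' D NE or γ = γ' NDE D^j NE γ''}, and it satisfies bounce(ρ_{n,d}(γ)) = bounce(γ) - 1. -/

import Mathlib

open scoped Classical

inductive Step : Type
  | N | E | D
deriving DecidableEq, Repr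

instance : Fintype Step :=
  ⟨{Step.N, Step.E, Step.D}, by intro x; cases x <;> simp⟩

open Step

/-- number of occurrences of the letter `s` in the word `w` -/
def cnt (s : Step) (w : List Step) : ℕ := w.count s

/-- Schröder (or Dyck, if no `D`s) path in an `n × n` grid: every prefix has at
least as many `N`s as `E`s, and the totals agree. -/
def IsSchroeder (w : List Step) : Prop :=
  (∀ p : List Step, p <+: w → cnt E p ≤ cnt N p) ∧ cnt N w = cnt E w

/-- words that are concatenations of blocks `NE` and `D` -/
inductive IsNED : List Step → Prop
  | nil : IsNED []
  | ne {w} : IsNED w → IsNED (N :: E :: w)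
  | d {w} : IsNED w → IsNED (D :: w)

/-- area of a Schröder path: the number of lower triangles between the path and the
main diagonal, computed as the sum over `N` and `D` steps of the height
`#N - #E` of the starting point of the step above the diagonal. -/
def areaAux : ℕ → List Step → ℕ
  | _, [] => 0
  | h, N :: w => h + areaAux (h+1) w
  | h, D :: w => h + areaAux h w
  | h, E :: w => areaAux (h-1) w

def area (w : List Step) : ℕ := areaAux 0 w

/-- area of an `N/E` lattice path in a rectangular grid: the number of boxes under
the path, i.e. the sum over `E` steps of the number of `N` steps before it. -/
def areaNEAux : ℕ → List Step → ℕ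
  | _, [] => 0
  | h, N :: w => areaNEAux (h+1) w
  | h, E :: w => h + areaNEAux h w
  | h, D :: w => areaNEAux h w

def areaNE (w : List Step) : ℕ := areaNEAux 0 w

/-- number of `N`s occurring before the `(j+1)`-st `E` (`j` is 0-indexed);
this is the height of the path above the horizontal interval `[j, j+1]`. -/
def nBefore : List Step → ℕ → ℕ
  | [], _ => 0
  | N :: w, j => 1 + nBefore w j
  | E :: w, j => if j = 0 then 0 else nBefore w (j-1)
  | D :: w, j => nBefore w j

/-- number of `E`s occurring before the `(i+1)`-st `N` (`i` is 0-indexed). -/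
def eBefore : List Step → ℕ → ℕ
  | [], _ => 0
  | E :: w, i => 1 + eBefore w i
  | N :: w, i => if i = 0 then 0 else eBefore w (i-1)
  | D :: w, i => eBefore w i

/-- number of `D`s occurring after the `e`-th `E` (`e` is 1-indexed). -/
def dAfterE : List Step → ℕ → ℕ
  | [], _ => 0
  | E :: w, e => if e ≤ 1 then cnt D w else dAfterE w (e-1)
  | D :: w, e => dAfterE w e
  | N :: w, e => dAfterE w e

/-- Combined computation of `bounce(Γ(γ)) + numph(γ)` along the bounce path of
`Γ(γ)`.  Here `g` is the Schröder path, `w = Γ(g)` is the underlying Dyck path,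
`nn` its size; the bounce path has corners (peaks) at the positions
`j₀ = 0, jₖ₊₁ = nBefore w jₖ`; each intermediate return `jₖ₊₁ < nn` contributes
`nn - jₖ₊₁` to the bounce of `Γ(g)`, and the peak with corner at `jₖ` is the start
of the `(jₖ+1)`-st east step, contributing to numph the number of diagonal steps of
`g` above it, i.e. after that east step. -/
def bounceAux (g w : List Step) (nn : ℕ) : ℕ → ℕ → ℕ
  | 0, _ => 0
  | fuel+1, j =>
      dAfterE g (j+1) +
        (if nn ≤ nBefore w j ∨ nBefore w j ≤ j then 0
         else (nn - nBefore w j) + bounceAux g w nn fuel (nBefore w j))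

/-- the bounce statistic of a Schröder path: `bounce(Γ(γ)) + numph(γ)` -/
def bounce (g : List Step) : ℕ :=
  let w := g.filter (fun s => s ≠ D)
  let nn := cnt E w
  if nn = 0 then 0 else bounceAux g w nn g.length 0

/-- the (signed) area coordinate `a_i = m·i - (#E before the (i+1)-st N)` of line `i`
(0-indexed) for a path in an `n × mn` grid. -/
def aLine (m : ℕ) (g : List Step) (i : ℕ) : ℤ := (m : ℤ) * i - eBefore g i

/-- an `(n, mn)`-Dyck path: `n` north steps, `mn` east steps, no diagonal steps,
staying weakly above the main diagonal. -/
def IsParkingPath (n m : ℕ) (g : List Step) : Prop :=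
  (∀ s ∈ g, s ≠ D) ∧ cnt N g = n ∧ cnt E g = m * n ∧
    ∀ p : List Step, p <+: g → cnt E p ≤ m * cnt N p

/-- an `(n, mn)`-parking function: an `(n,mn)`-Dyck path labelled by a permutation
`w` of `{0, …, n-1}` whose labels increase within each column. -/
def IsParking (n m : ℕ) (g : List Step) (w : Fin n → Fin n) : Prop :=
  IsParkingPath n m g ∧ Function.Bijective w ∧
    ∀ i j : Fin n, (j : ℕ) = (i : ℕ) + 1 → eBefore g (i : ℕ) = eBefore g (j : ℕ) → w i < w j

/-- the diagonal inversion statistic of an `(n, mn)`-parking function -/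
def dinv (n m : ℕ) (g : List Step) (w : Fin n → Fin n) : ℤ :=
  ∑ i : Fin n, ∑ j : Fin n,
    if (i : ℕ) < (j : ℕ) then
      (if w i < w j then max 0 ((m : ℤ) - |aLine m g (i : ℕ) - aLine m g (j : ℕ)|) else 0) +
        (if w j < w i then max 0 ((m : ℤ) - |aLine m g (j : ℕ) - aLine m g (i : ℕ) + 1|) else 0)
    else 0

/-- the number of descents of the word `w` -/
def desNum (n : ℕ) (w : Fin n → Fin n) : ℕ :=
  ((Finset.range (n-1)).filter fun i =>
    ∃ hj : i + 1 < n, w ⟨i+1, hj⟩ < w ⟨i, Nat.lt_of_succ_lt hj⟩).card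

/-- the major index of the word `w` (with positions 1-indexed as usual) -/
def majStat (n : ℕ) (w : Fin n → Fin n) : ℕ :=
  ∑ i ∈ (Finset.range (n-1)).filter (fun i =>
    ∃ hj : i + 1 < n, w ⟨i+1, hj⟩ < w ⟨i, Nat.lt_of_succ_lt hj⟩), (i+1)

/-- the reading word of a labelled path in an `n × mn` grid: labels are read along
diagonals parallel to the main diagonal, starting with the farthest diagonal,
each diagonal being read from top-right to bottom-left. -/
def readWord (n m : ℕ) (g : List Step) (lab : ℕ → ℕ) : List ℕ :=
  ((List.range (m * n + 1)).map fun k =>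
    (((List.range n).reverse.filter fun i => aLine m g i = (m * n : ℤ) - k).map lab)).flatten

/-- the labelling function `ℕ → ℕ` associated to a permutation of `Fin n` -/
def labOf {n : ℕ} (w : Fin n → Fin n) : ℕ → ℕ :=
  fun i => if h : i < n then (w ⟨i, h⟩ : ℕ) else 0

/-- one step of the algorithm `φ`, on the reversed word: find the rightmost
(i.e. first in the reversed word) east step not followed by an east step,
and swap it with the letter following it. -/
def phiRevAux : List Step → List Step
  | a :: E :: t => if a ≠ E then E :: a :: t else a :: phiRevAux (E :: t)
  | a :: t => a :: phiRevAux t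
  | [] => []

/-- one step of the algorithm `φ` -/
def phiStep (w : List Step) : List Step := (phiRevAux w.reverse).reverse

/-- the sequence `φ(γ) = (γ₀, γ₁, …, γ_{bounce γ})` produced by the algorithm -/
def phiSeq (g : List Step) : List (List Step) :=
  (List.range (bounce g + 1)).map fun i => phiStep^[i] g

/-- the union of all sequences `φ(γ)` over area-0 Schröder paths with `n` blocks -/
def phiUniv (n : ℕ) : Set (List Step) :=
  {p | ∃ g, IsNED g ∧ cnt N g + cnt D g = n ∧ p ∈ phiSeq g}

/-- the map replacing each block `NE` by `N` and each `D` by `E` -/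
def theta : List Step → List Step
  | N :: E :: w => N :: theta w
  | D :: w => E :: theta w
  | _ :: w => theta w
  | [] => []

/-- the cells of the hook-shaped Young diagram `(d, 1^{n-d})` (row 0 is the arm). -/
def hookCells (n d : ℕ) : Finset (ℕ × ℕ) :=
  ((Finset.range d).image fun c => ((0 : ℕ), c)) ∪
    ((Finset.range (n - d + 1)).image fun r => (r, (0 : ℕ)))

/-- a standard Young tableau of hook shape `(d, 1^{n-d})`: `pos i` is the cell
`(row, column)` containing the entry `i+1`; entries increase along rows and columns. -/
structure HookSYT (n d : ℕ) where
  pos : Fin n → ℕ × ℕ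
  mem : ∀ i, pos i ∈ hookCells n d
  inj : Function.Injective pos
  rowInc : ∀ i j : Fin n, (pos i).1 = (pos j).1 → (pos i).2 < (pos j).2 → i < j
  colInc : ∀ i j : Fin n, (pos i).2 = (pos j).2 → (pos i).1 < (pos j).1 → i < j

/-- the descent set of a standard Young tableau: entries `i ∈ {1, …, n-1}` such that
the entry `i+1` lies in a strictly higher row than `i`. -/
def Des {n d : ℕ} (τ : HookSYT n d) : Finset ℕ :=
  (Finset.Icc 1 (n-1)).filter fun i =>
    ∃ hi : i < n, ∃ hi' : i - 1 < n, (τ.pos ⟨i - 1, hi'⟩).1 < (τ.pos ⟨i, hi⟩).1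

/-- the major index of a standard Young tableau -/
def majT {n d : ℕ} (τ : HookSYT n d) : ℕ := ∑ i ∈ Des τ, i

/-- the number of descents of a standard Young tableau -/
def desT {n d : ℕ} (τ : HookSYT n d) : ℕ := (Des τ).card

/-- the maximum of the descent set -/
def maxDes {n d : ℕ} (τ : HookSYT n d) : ℕ := (Des τ).sup id

/-- the map `M_{n,d}`: the path `γ₁γ₂⋯γₙ` with `γₙ = NE`, `γ_{n-i} = NE` if
`i ∈ Des τ` and `γ_{n-i} = D` otherwise -/
def Mmap (n d : ℕ) (τ : HookSYT n d) : List Step :=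
  (((List.range n).map fun j =>
    if j = n - 1 then [N, E]
    else if (n - 1 - j) ∈ Des τ then [N, E] else [D])).flatten

/-- the map `S_{n,d}`: the path `γ₁⋯γ_{n-1}` with `γ_{n-i} = NNEE` if
`i = max Des τ` and `1 ∈ Des τ`, `γ_{n-i} = NDE` if `i = max Des τ` and
`1 ∉ Des τ`, `γ_{n-i} = NE` if `i = 1` or `i ∈ Des τ ∖ {max Des τ}`, and
`γ_{n-i} = D` otherwise. -/
def Smap (n d : ℕ) (τ : HookSYT n d) : List Step :=
  (((List.range (n-1)).map fun j =>
    if (n - 1 - j) = maxDes τ then (if 1 ∈ Des τ then [N,N,E,E] else [N,D,E])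
    else if (n - 1 - j) = 1 ∨ (n - 1 - j) ∈ Des τ then [N,E] else [D])).flatten

/-- the set `V_{n,d}` of Schröder paths of the form `Dʲ NNEE u` or `Dʲ NDE u`
with `u ∈ {NE,D}* NE`, having `n-d+1` north steps and `d-1` diagonal steps. -/
def Vset (n d : ℕ) : Set (List Step) :=
  {g | (∃ j u, IsNED u ∧
      (g = List.replicate j D ++ [N,N,E,E] ++ (u ++ [N,E]) ∨
       g = List.replicate j D ++ [N,D,E] ++ (u ++ [N,E]))) ∧
     cnt N g = n - d + 1 ∧ cnt D g = d - 1}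

/-- Schröder paths in an `n × n` grid with `dd` diagonal steps, area `a`,
ending with `NE` -/
def SchT (n dd a : ℕ) : Set (List Step) :=
  {g | IsSchroeder g ∧ cnt D g = dd ∧ cnt N g = n - dd ∧ area g = a ∧ ∃ u, g = u ++ [N, E]}

/-- the 'upper' forms: `Dʲ NNEE γ' NE NE` or `γ' NE Dʲ NNEE γ''` -/
def UpperForm (g : List Step) : Prop :=
  (∃ j u, IsNED u ∧ g = List.replicate j D ++ [N,N,E,E] ++ u ++ [N,E,N,E]) ∨
  (∃ u j v, IsNED u ∧ g = u ++ [N,E] ++ List.replicate j D ++ [N,N,E,E] ++ v)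

/-- the 'lower' forms: `Dʲ NNEE γ' D NE` or `γ' NDE Dʲ NE γ''` -/
def LowerForm (g : List Step) : Prop :=
  (∃ j u, IsNED u ∧ g = List.replicate j D ++ [N,N,E,E] ++ u ++ [D,N,E]) ∨
  (∃ u j v, IsNED u ∧ g = u ++ [N,D,E] ++ List.replicate j D ++ [N,E] ++ v)

/-- the number of distinct columns of the path -/
def Tcols (n : ℕ) (g : List Step) : ℕ :=
  ((Finset.range n).image fun i => eBefore g i).card

/-- the `q`-integer `[k]_q = 1 + q + ⋯ + q^{k-1}` as a polynomial -/
noncomputable def qInt (k : ℕ) : Polynomial ℤ := ∑ i ∈ Finset.range k, Polynomial.X ^ i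

/-- the `q`-factorial `[k]!_q` -/
noncomputable def qFact (k : ℕ) : Polynomial ℤ := ∏ i ∈ Finset.range k, qInt (i+1)

section Aux
open List

lemma cnt_nil (s : Step) : cnt s [] = 0 := rfl
lemma cnt_cons (s a : Step) (w : List Step) :
    cnt s (a :: w) = cnt s w + if a = s then 1 else 0 := by
  simp [cnt, List.count_cons]
lemma cnt_append (s : Step) (u v : List Step) :
    cnt s (u ++ v) = cnt s u + cnt s v := List.count_append ..
lemma cnt_replicate (s a : Step) (j : ℕ) :
    cnt s (List.replicate j a) = if a = s then j else 0 := by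
  induction j with
  | zero => simp [cnt]
  | succ j ih => simp [List.replicate_succ, cnt_cons, ih]; split <;> omega

lemma cntE_filter (g : List Step) : cnt E (g.filter (fun s => s ≠ D)) = cnt E g := by
  induction g with
  | nil => rfl
  | cons a w ih =>
    simp only [ne_eq, decide_not] at ih ⊢
    cases a <;> simp [List.filter_cons, cnt_cons, ih]

lemma cnt_le_length (s : Step) (w : List Step) : cnt s w ≤ w.length :=
  List.count_le_length ..

/-- fuel independence of `bounceAux` -/
lemma bounceAux_fuel (g w : List Step) (nn : ℕ) :
    ∀ f₁ f₂ j, 1 ≤ f₁ → nn - j ≤ f₁ → 1 ≤ f₂ → nn - j ≤ f₂ →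
      bounceAux g w nn f₁ j = bounceAux g w nn f₂ j := by
  intro f₁
  induction f₁ with
  | zero => omega
  | succ f ih =>
    intro f₂ j _ h1 h2 h3
    match f₂, h2 with
    | f₂+1, _ =>
      simp only [bounceAux]
      by_cases hc : nn ≤ nBefore w j ∨ nBefore w j ≤ j
      · simp [hc]
      · rw [if_neg hc, if_neg hc]
        push_neg at hc
        have := ih f₂ (nBefore w j) (by omega) (by omega) (by omega) (by omega)
        omega

lemma dAfterE_D (g : List Step) (e : ℕ) : dAfterE (D :: g) e = dAfterE g e := rfl

lemma bounceAux_D (g w : List Step) (nn : ℕ) :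
    ∀ f j, bounceAux (D :: g) w nn f j = bounceAux g w nn f j := by
  intro f
  induction f with
  | zero => intro j; rfl
  | succ f ih => intro j; simp only [bounceAux, dAfterE_D, ih]

lemma bounce_D (g : List Step) : bounce (D :: g) = bounce g := by
  have hfil : (D :: g).filter (fun s => s ≠ D) = g.filter (fun s => s ≠ D) := by
    simp [List.filter_cons]
  simp only [bounce, hfil, List.length_cons]
  set w := g.filter (fun s => s ≠ D) with hw
  by_cases h : cnt E w = 0
  · simp [h]
  · simp only [if_neg h]
    rw [bounceAux_D]
    have hl : cnt E w ≤ g.length := le_trans (cnt_le_length _ _) (List.length_filter_le _ _)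
    exact bounceAux_fuel g w (cnt E w) (g.length + 1) g.length 0 (by omega) (by omega)
      (by omega) (by omega)

end Aux
section Aux2
open List

lemma nBefore_NE (w : List Step) (j : ℕ) :
    nBefore (N :: E :: w) (j+1) = nBefore w j + 1 := by
  simp [nBefore]; omega

lemma nBefore_NE0 (w : List Step) : nBefore (N :: E :: w) 0 = 1 := by
  simp [nBefore]

lemma nBefore_NNEE (w : List Step) (j : ℕ) :
    nBefore (N :: N :: E :: E :: w) (j+2) = nBefore w j + 2 := by
  simp [nBefore]; omega

lemma nBefore_NNEE0 (w : List Step) : nBefore (N :: N :: E :: E :: w) 0 = 2 := by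
  simp [nBefore]

lemma dAfterE_NE (g : List Step) (j : ℕ) :
    dAfterE (N :: E :: g) (j+2) = dAfterE g (j+1) := by
  simp [dAfterE]

lemma dAfterE_NE1 (g : List Step) : dAfterE (N :: E :: g) 1 = cnt D g := by
  simp [dAfterE]

lemma dAfterE_NDE (g : List Step) (j : ℕ) :
    dAfterE (N :: D :: E :: g) (j+2) = dAfterE g (j+1) := by
  simp [dAfterE]

lemma dAfterE_NDE1 (g : List Step) : dAfterE (N :: D :: E :: g) 1 = cnt D g := by
  simp [dAfterE]

lemma dAfterE_NNEE (g : List Step) (j : ℕ) :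
    dAfterE (N :: N :: E :: E :: g) (j+3) = dAfterE g (j+1) := by
  simp [dAfterE]

lemma dAfterE_NNEE1 (g : List Step) : dAfterE (N :: N :: E :: E :: g) 1 = cnt D (E :: g) := by
  simp [dAfterE]

lemma bounceAux_shift_NE (g w : List Step) (nn : ℕ) :
    ∀ f j, bounceAux (N::E::g) (N::E::w) (nn+1) f (j+1) = bounceAux g w nn f j := by
  intro f
  induction f with
  | zero => intro j; rfl
  | succ f ih =>
    intro j
    simp only [bounceAux, dAfterE_NE, nBefore_NE]
    have hc : (nn + 1 ≤ nBefore w j + 1 ∨ nBefore w j + 1 ≤ j + 1) ↔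
        (nn ≤ nBefore w j ∨ nBefore w j ≤ j) := by omega
    by_cases h : nn ≤ nBefore w j ∨ nBefore w j ≤ j
    · rw [if_pos (hc.2 h), if_pos h]
    · rw [if_neg (fun hh => h (hc.1 hh)), if_neg h, ih]
      omega

lemma bounceAux_shift_NDE (g w : List Step) (nn : ℕ) :
    ∀ f j, bounceAux (N::D::E::g) (N::E::w) (nn+1) f (j+1) = bounceAux g w nn f j := by
  intro f
  induction f with
  | zero => intro j; rfl
  | succ f ih =>
    intro j
    simp only [bounceAux, dAfterE_NDE, nBefore_NE]
    have hc : (nn + 1 ≤ nBefore w j + 1 ∨ nBefore w j + 1 ≤ j + 1) ↔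
        (nn ≤ nBefore w j ∨ nBefore w j ≤ j) := by omega
    by_cases h : nn ≤ nBefore w j ∨ nBefore w j ≤ j
    · rw [if_pos (hc.2 h), if_pos h]
    · rw [if_neg (fun hh => h (hc.1 hh)), if_neg h, ih]
      omega

lemma bounceAux_shift_NNEE (g w : List Step) (nn : ℕ) :
    ∀ f j, bounceAux (N::N::E::E::g) (N::N::E::E::w) (nn+2) f (j+2) = bounceAux g w nn f j := by
  intro f
  induction f with
  | zero => intro j; rfl
  | succ f ih =>
    intro j
    have hd : dAfterE (N::N::E::E::g) (j + 2 + 1) = dAfterE g (j+1) := dAfterE_NNEE g j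
    simp only [bounceAux, hd, nBefore_NNEE]
    have hc : (nn + 2 ≤ nBefore w j + 2 ∨ nBefore w j + 2 ≤ j + 2) ↔
        (nn ≤ nBefore w j ∨ nBefore w j ≤ j) := by omega
    by_cases h : nn ≤ nBefore w j ∨ nBefore w j ≤ j
    · rw [if_pos (hc.2 h), if_pos h]
    · rw [if_neg (fun hh => h (hc.1 hh)), if_neg h, ih]
      omega

lemma bounce_NE (g : List Step) : bounce (N :: E :: g) = cnt D g + cnt E g + bounce g := by
  have hfil : (N :: E :: g).filter (fun s => s ≠ D) = N :: E :: g.filter (fun s => s ≠ D) := by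
    simp [List.filter_cons]
  simp only [bounce, hfil, List.length_cons]
  set w := g.filter (fun s => s ≠ D) with hw
  have hE : cnt E w = cnt E g := cntE_filter g
  have hE2 : cnt E (N :: E :: w) = cnt E w + 1 := by simp [cnt_cons]
  rw [hE2]
  rw [if_neg (by omega)]
  have hlen : cnt E w ≤ g.length := hE ▸ cnt_le_length E g
  -- unfold one step of bounceAux
  have h1 : bounceAux (N::E::g) (N::E::w) (cnt E w + 1) (g.length + 1 + 1) 0 =
      dAfterE (N::E::g) 1 + (if cnt E w + 1 ≤ nBefore (N::E::w) 0 ∨ nBefore (N::E::w) 0 ≤ 0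
        then 0 else (cnt E w + 1 - nBefore (N::E::w) 0) +
          bounceAux (N::E::g) (N::E::w) (cnt E w + 1) (g.length + 1) (nBefore (N::E::w) 0)) := rfl
  rw [h1, dAfterE_NE1, nBefore_NE0]
  by_cases h : cnt E w = 0
  · rw [if_pos (by omega), if_pos h]
    omega
  · rw [if_neg (by omega), if_neg h]
    have h2 : bounceAux (N::E::g) (N::E::w) (cnt E w + 1) (g.length + 1) 1 =
        bounceAux g w (cnt E w) (g.length + 1) 0 := bounceAux_shift_NE g w (cnt E w) _ 0
    rw [h2, bounceAux_fuel g w (cnt E w) (g.length + 1) g.length 0 (by omega) (by omega)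
      (by omega) (by omega)]
    omega

lemma bounce_NDE (g : List Step) : bounce (N :: D :: E :: g) = cnt D g + cnt E g + bounce g := by
  have hfil : (N :: D :: E :: g).filter (fun s => s ≠ D) = N :: E :: g.filter (fun s => s ≠ D) := by
    simp [List.filter_cons]
  simp only [bounce, hfil, List.length_cons]
  set w := g.filter (fun s => s ≠ D) with hw
  have hE : cnt E w = cnt E g := cntE_filter g
  have hE2 : cnt E (N :: E :: w) = cnt E w + 1 := by simp [cnt_cons]
  rw [hE2]
  rw [if_neg (by omega)]
  have hlen : cnt E w ≤ g.length := hE ▸ cnt_le_length E g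
  have h1 : bounceAux (N::D::E::g) (N::E::w) (cnt E w + 1) (g.length + 1 + 1 + 1) 0 =
      dAfterE (N::D::E::g) 1 + (if cnt E w + 1 ≤ nBefore (N::E::w) 0 ∨ nBefore (N::E::w) 0 ≤ 0
        then 0 else (cnt E w + 1 - nBefore (N::E::w) 0) +
          bounceAux (N::D::E::g) (N::E::w) (cnt E w + 1) (g.length + 1 + 1) (nBefore (N::E::w) 0)) := rfl
  rw [h1, dAfterE_NDE1, nBefore_NE0]
  by_cases h : cnt E w = 0
  · rw [if_pos (by omega), if_pos h]
    omega
  · rw [if_neg (by omega), if_neg h]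
    have h2 : bounceAux (N::D::E::g) (N::E::w) (cnt E w + 1) (g.length + 2) 1 =
        bounceAux g w (cnt E w) (g.length + 2) 0 := bounceAux_shift_NDE g w (cnt E w) _ 0
    rw [show g.length + 1 + 1 = g.length + 2 from rfl, h2,
      bounceAux_fuel g w (cnt E w) (g.length + 2) g.length 0 (by omega) (by omega)
      (by omega) (by omega)]
    omega

lemma bounce_NNEE (g : List Step) :
    bounce (N :: N :: E :: E :: g) = cnt D g + cnt E g + bounce g := by
  have hfil : (N :: N :: E :: E :: g).filter (fun s => s ≠ D) =
      N :: N :: E :: E :: g.filter (fun s => s ≠ D) := by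
    simp [List.filter_cons]
  simp only [bounce, hfil, List.length_cons]
  set w := g.filter (fun s => s ≠ D) with hw
  have hE : cnt E w = cnt E g := cntE_filter g
  have hE2 : cnt E (N :: N :: E :: E :: w) = cnt E w + 2 := by simp [cnt_cons]
  rw [hE2]
  rw [if_neg (by omega)]
  have hlen : cnt E w ≤ g.length := hE ▸ cnt_le_length E g
  have h1 : bounceAux (N::N::E::E::g) (N::N::E::E::w) (cnt E w + 2) (g.length + 4) 0 =
      dAfterE (N::N::E::E::g) 1 +
        (if cnt E w + 2 ≤ nBefore (N::N::E::E::w) 0 ∨ nBefore (N::N::E::E::w) 0 ≤ 0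
        then 0 else (cnt E w + 2 - nBefore (N::N::E::E::w) 0) +
          bounceAux (N::N::E::E::g) (N::N::E::E::w) (cnt E w + 2) (g.length + 3)
            (nBefore (N::N::E::E::w) 0)) := rfl
  rw [show g.length + 1 + 1 + 1 + 1 = g.length + 4 from rfl, h1, nBefore_NNEE0]
  have hd1 : dAfterE (N::N::E::E::g) 1 = cnt D g := by
    rw [dAfterE_NNEE1]; simp [cnt_cons]
  rw [hd1]
  by_cases h : cnt E w = 0
  · rw [if_pos (by omega), if_pos h]
    omega
  · rw [if_neg (by omega), if_neg h]
    have h2 : bounceAux (N::N::E::E::g) (N::N::E::E::w) (cnt E w + 2) (g.length + 3) 2 =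
        bounceAux g w (cnt E w) (g.length + 3) 0 := bounceAux_shift_NNEE g w (cnt E w) _ 0
    rw [show (2:ℕ) = 0 + 2 from rfl] at h2
    rw [h2, bounceAux_fuel g w (cnt E w) (g.length + 3) g.length 0 (by omega) (by omega)
      (by omega) (by omega)]
    omega

lemma bounce_repD (j : ℕ) (s : List Step) :
    bounce (List.replicate j D ++ s) = bounce s := by
  induction j with
  | zero => simp
  | succ j ih => rw [List.replicate_succ, List.cons_append, bounce_D, ih]

/-- weight of a NED word given the (D+E)-count of the suffix -/
def nedW : List Step → ℕ → ℕ
  | [], _ => 0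
  | Step.N :: Step.E :: w, m => (cnt D w + cnt E w + m) + nedW w m
  | Step.D :: w, m => nedW w m
  | _, _ => 0

lemma bounce_ned_append {u : List Step} (hu : IsNED u) (s : List Step) :
    bounce (u ++ s) = nedW u (cnt D s + cnt E s) + bounce s := by
  induction hu with
  | nil => simp [nedW]
  | @ne w hw ih =>
    rw [List.cons_append, List.cons_append, bounce_NE, ih]
    simp only [nedW, cnt_append]
    omega
  | @d w hw ih =>
    rw [List.cons_append, bounce_D, ih]
    simp only [nedW]

end Aux2
section Aux3
open List

lemma prefix_append_cases {p a b : List Step} (h : p <+: a ++ b) :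
    p <+: a ∨ ∃ q, p = a ++ q ∧ q <+: b := by
  induction a generalizing p with
  | nil => exact Or.inr ⟨p, by simpa using h⟩
  | cons x a ih =>
    cases p with
    | nil => exact Or.inl (List.nil_prefix)
    | cons y p =>
      rw [List.cons_append, List.cons_prefix_cons] at h
      obtain ⟨rfl, h⟩ := h
      rcases ih h with h' | ⟨q, rfl, hq⟩
      · exact Or.inl (List.cons_prefix_cons.2 ⟨rfl, h'⟩)
      · exact Or.inr ⟨q, rfl, hq⟩

lemma isSchroeder_append {a b : List Step} (ha : IsSchroeder a) (hb : IsSchroeder b) :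
    IsSchroeder (a ++ b) := by
  constructor
  · intro p hp
    rcases prefix_append_cases hp with h | ⟨q, rfl, hq⟩
    · exact ha.1 p h
    · simp only [cnt_append]
      have := ha.1 a (List.prefix_refl a)
      have := hb.1 q hq
      omega
  · simp only [cnt_append, ha.2, hb.2]

lemma isSchroeder_of_ned {u : List Step} (hu : IsNED u) : IsSchroeder u := by
  induction hu with
  | nil => exact ⟨fun p hp => by simp [List.prefix_nil.1 hp, cnt_nil], rfl⟩
  | @ne w hw ih =>
    constructor
    · intro p hp
      cases p with
      | nil => simp [cnt_nil]
      | cons y p =>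
        rw [List.cons_prefix_cons] at hp
        obtain ⟨rfl, hp⟩ := hp
        cases p with
        | nil => simp [cnt]
        | cons z p =>
          rw [List.cons_prefix_cons] at hp
          obtain ⟨rfl, hp⟩ := hp
          have := ih.1 p hp
          simp [cnt_cons, cnt_nil]
          omega
    · have := ih.2
      simp [cnt_cons, cnt_nil]
      omega
  | @d w hw ih =>
    constructor
    · intro p hp
      cases p with
      | nil => simp [cnt_nil]
      | cons y p =>
        rw [List.cons_prefix_cons] at hp
        obtain ⟨rfl, hp⟩ := hp
        have := ih.1 p hp
        simp [cnt_cons, cnt_nil]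
        omega
    · have := ih.2
      simp [cnt_cons, cnt_nil]
      omega

lemma ned_balanced {u : List Step} (hu : IsNED u) : cnt N u = cnt E u :=
  (isSchroeder_of_ned hu).2

lemma isNED_replicate (j : ℕ) : IsNED (List.replicate j D) := by
  induction j with
  | zero => exact IsNED.nil
  | succ j ih => rw [List.replicate_succ]; exact IsNED.d ih

lemma isNED_append {u v : List Step} (hu : IsNED u) (hv : IsNED v) : IsNED (u ++ v) := by
  induction hu with
  | nil => simpa
  | ne _ ih => exact IsNED.ne ih
  | d _ ih => exact IsNED.d ih

lemma isSchroeder_suffix {a b : List Step} (h : IsSchroeder (a ++ b))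
    (hbal : cnt N a = cnt E a) : IsSchroeder b := by
  constructor
  · intro p hp
    have := h.1 (a ++ p) ((List.prefix_append_right_inj a).2 hp)
    simp only [cnt_append] at this
    omega
  · have := h.2
    simp only [cnt_append] at this
    omega

-- area lemmas
lemma areaAux_D (s : List Step) : areaAux 0 (D :: s) = areaAux 0 s := by
  simp [areaAux]

lemma areaAux_NE (s : List Step) : areaAux 0 (N :: E :: s) = areaAux 0 s := by
  simp [areaAux]

lemma areaAux_NDE (s : List Step) : areaAux 0 (N :: D :: E :: s) = 1 + areaAux 0 s := by
  simp [areaAux]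

lemma areaAux_NNEE (s : List Step) : areaAux 0 (N :: N :: E :: E :: s) = 1 + areaAux 0 s := by
  simp [areaAux]

lemma areaAux_ned {u : List Step} (hu : IsNED u) (s : List Step) :
    areaAux 0 (u ++ s) = areaAux 0 s := by
  induction hu with
  | nil => rfl
  | ne _ ih => rw [List.cons_append, List.cons_append, areaAux_NE, ih]
  | d _ ih => rw [List.cons_append, areaAux_D, ih]

lemma areaAux_repD (j : ℕ) (s : List Step) :
    areaAux 0 (List.replicate j D ++ s) = areaAux 0 s :=
  areaAux_ned (isNED_replicate j) s

lemma ned_of_area0 : ∀ v : List Step, IsSchroeder v → area v = 0 → IsNED v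
  | [], _, _ => IsNED.nil
  | E :: w, hs, _ => by
    exfalso
    have := hs.1 [E] ⟨w, rfl⟩
    simp [cnt] at this
  | D :: w, hs, ha => by
    refine IsNED.d (ned_of_area0 w ?_ ?_)
    · constructor
      · intro p hp
        have := hs.1 (D :: p) (List.cons_prefix_cons.2 ⟨rfl, hp⟩)
        simp [cnt_cons, cnt_nil] at this
        omega
      · have := hs.2
        simp [cnt_cons, cnt_nil] at this
        omega
    · simpa [area, areaAux] using ha
  | [N], hs, _ => by
    exfalso
    have := hs.2
    simp [cnt] at this
  | N :: N :: w, _, ha => by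
    exfalso
    simp [area, areaAux] at ha
  | N :: D :: w, _, ha => by
    exfalso
    simp [area, areaAux] at ha
  | N :: E :: w, hs, ha => by
    refine IsNED.ne (ned_of_area0 w ?_ ?_)
    · constructor
      · intro p hp
        have := hs.1 (N :: E :: p) (List.cons_prefix_cons.2 ⟨rfl,
          List.cons_prefix_cons.2 ⟨rfl, hp⟩⟩)
        simp [cnt_cons, cnt_nil] at this
        omega
      · have := hs.2
        simp [cnt_cons, cnt_nil] at this
        omega
    · simpa [area, areaAux] using ha

-- cancellation lemmas
lemma repD_cancel : ∀ (j₁ j₂ : ℕ) (x₁ x₂ : List Step),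
    List.replicate j₁ D ++ (N :: x₁) = List.replicate j₂ D ++ (N :: x₂) →
    j₁ = j₂ ∧ x₁ = x₂ := by
  intro j₁
  induction j₁ with
  | zero =>
    intro j₂ x₁ x₂ h
    cases j₂ with
    | zero => simpa using h
    | succ j₂ => rw [List.replicate_succ] at h; simp at h
  | succ j₁ ih =>
    intro j₂ x₁ x₂ h
    cases j₂ with
    | zero => rw [List.replicate_succ] at h; simp at h
    | succ j₂ =>
      rw [List.replicate_succ, List.replicate_succ] at h
      simp only [List.cons_append, List.cons.injEq, true_and] at h
      obtain ⟨h1, h2⟩ := ih j₂ x₁ x₂ h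
      exact ⟨by omega, h2⟩

lemma ned_cancel {u₁ : List Step} (hu₁ : IsNED u₁) :
    ∀ {u₂ : List Step}, IsNED u₂ → ∀ (x₁ x₂ : List Step),
      u₁ ++ (N :: D :: x₁) = u₂ ++ (N :: D :: x₂) → u₁ = u₂ ∧ x₁ = x₂ := by
  induction hu₁ with
  | nil =>
    intro u₂ hu₂ x₁ x₂ h
    cases hu₂ with
    | nil => simpa using h
    | ne _ => simp at h
    | d _ => simp at h
  | @ne w hw ih =>
    intro u₂ hu₂ x₁ x₂ h
    cases hu₂ with
    | nil => simp at h
    | @ne w' hw' =>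
      simp only [List.cons_append, List.cons.injEq, true_and] at h
      obtain ⟨h1, h2⟩ := ih hw' x₁ x₂ h
      exact ⟨by rw [h1], h2⟩
    | d _ => simp at h
  | @d w hw ih =>
    intro u₂ hu₂ x₁ x₂ h
    cases hu₂ with
    | nil => simp at h
    | ne _ => simp at h
    | @d w' hw' =>
      simp only [List.cons_append, List.cons.injEq, true_and] at h
      obtain ⟨h1, h2⟩ := ih hw' x₁ x₂ h
      exact ⟨by rw [h1], h2⟩

lemma filter_ned {u : List Step} (hu : IsNED u) :
    u.filter (fun s => s ≠ D) = [] ∨ ∃ t, u.filter (fun s => s ≠ D) = N :: E :: t := by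
  induction hu with
  | nil => exact Or.inl rfl
  | @ne w hw ih =>
    right
    exact ⟨w.filter (fun s => s ≠ D), by simp [List.filter_cons]⟩
  | @d w hw ih => simpa [List.filter_cons] using ih

end Aux3
section Aux4
open List

lemma bounce_nil : bounce ([] : List Step) = 0 := rfl

lemma isSchroeder_iff (w : List Step) :
    IsSchroeder w ↔ (∀ p ∈ w.inits, cnt E p ≤ cnt N p) ∧ cnt N w = cnt E w := by
  unfold IsSchroeder
  simp [List.mem_inits]

lemma isSchroeder_NNEE : IsSchroeder [N,N,E,E] := (isSchroeder_iff _).2 (by decide)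
lemma isSchroeder_NDE : IsSchroeder [N,D,E] := (isSchroeder_iff _).2 (by decide)
lemma isSchroeder_NE : IsSchroeder [N,E] := (isSchroeder_iff _).2 (by decide)
lemma isSchroeder_DNE : IsSchroeder [D,N,E] := (isSchroeder_iff _).2 (by decide)
lemma isSchroeder_NENE : IsSchroeder [N,E,N,E] := (isSchroeder_iff _).2 (by decide)
lemma isSchroeder_repD (j : ℕ) : IsSchroeder (List.replicate j D) :=
  isSchroeder_of_ned (isNED_replicate j)

lemma filter_repD (j : ℕ) : (List.replicate j D).filter (fun s => s ≠ D) = [] := by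
  induction j with
  | zero => rfl
  | succ j ih => rw [List.replicate_succ]; simpa [List.filter_cons]

lemma append_cancel_right' {a b c : List Step} (h : a ++ c = b ++ c) : a = b :=
  List.append_cancel_right h

end Aux4
/-- For `0 ≤ d ≤ n-1`, the map `ρ_{n,d}` (here any `rho` satisfying its
defining equations) is a bijection from the 'upper' area-1 Schröder paths with `d`
diagonal steps onto the 'lower' area-1 Schröder paths with `d+1` diagonal steps, and
`bounce(ρ_{n,d}(γ)) = bounce(γ) - 1`. -/
theorem stmt18 (n d : ℕ) (hd : d ≤ n - 1)
    (rho : List Step → List Step)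
    (hr1 : ∀ (u : List Step) (j : ℕ) (v : List Step), IsNED u →
      rho (u ++ [N,E] ++ List.replicate j D ++ [N,N,E,E] ++ v) =
        u ++ [N,D,E] ++ List.replicate j D ++ [N,E] ++ v)
    (hr2 : ∀ (j : ℕ) (u : List Step), IsNED u →
      rho (List.replicate j D ++ [N,N,E,E] ++ u ++ [N,E,N,E]) =
        List.replicate j D ++ [N,N,E,E] ++ u ++ [D,N,E]) :
    Set.BijOn rho
      {g | IsSchroeder g ∧ area g = 1 ∧ cnt D g = d ∧ cnt N g = n - d ∧ UpperForm g}
      {g | IsSchroeder g ∧ area g = 1 ∧ cnt D g = d + 1 ∧ cnt N g = n - (d+1) ∧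
        LowerForm g} ∧
    ∀ g ∈ {g | IsSchroeder g ∧ area g = 1 ∧ cnt D g = d ∧ cnt N g = n - d ∧ UpperForm g},
      bounce (rho g) = bounce g - 1 := by
    classical
    have hDNEned : IsNED [D,N,E] := IsNED.d (IsNED.ne IsNED.nil)
    have hNENEned : IsNED [N,E,N,E] := IsNED.ne (IsNED.ne IsNED.nil)
    have b0 : bounce ([N,E] : List Step) = 0 := by
      have := bounce_NE ([] : List Step)
      simpa [cnt_nil, bounce_nil] using this
    have b1 : bounce ([D,N,E] : List Step) = 0 := by
      have h := bounce_D ([N,E] : List Step)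
      simpa [b0] using h
    have b2 : bounce ([N,E,N,E] : List Step) = 1 := by
      have h := bounce_NE ([N,E] : List Step)
      simp [cnt_cons, cnt_nil, b0] at h
      exact h
    constructor
    · refine ⟨?_, ?_, ?_⟩
      · -- MapsTo
        rintro g ⟨hs, ha, hD, hN, hUF⟩
        rcases hUF with ⟨j, u, hu, rfl⟩ | ⟨u, j, v, hu, rfl⟩
        · rw [hr2 j u hu]
          refine ⟨?_, ?_, ?_, ?_, Or.inl ⟨j, u, hu, rfl⟩⟩
          · exact isSchroeder_append (isSchroeder_append (isSchroeder_append
              (isSchroeder_repD j) isSchroeder_NNEE) (isSchroeder_of_ned hu))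
              isSchroeder_DNE
          · show area _ = 1
            simp only [area, List.append_assoc, List.cons_append, List.nil_append]
            rw [areaAux_repD, areaAux_NNEE, areaAux_ned hu, areaAux_D, areaAux_NE]
            rfl
          · simp only [cnt_append, cnt_replicate, cnt_cons, cnt_nil] at hD ⊢
            simp at hD ⊢
            omega
          · simp only [cnt_append, cnt_replicate, cnt_cons, cnt_nil] at hN ⊢
            simp at hN ⊢
            omega
        · -- form B
          have hbal : cnt N (u ++ [N,E] ++ List.replicate j D ++ [N,N,E,E]) =
              cnt E (u ++ [N,E] ++ List.replicate j D ++ [N,N,E,E]) := by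
            have hb := ned_balanced hu
            simp [cnt_append, cnt_replicate, cnt_cons, cnt_nil]
            omega
          have hv : IsSchroeder v := isSchroeder_suffix hs hbal
          have hva : area v = 0 := by
            have ha' := ha
            simp only [area, List.append_assoc, List.cons_append, List.nil_append] at ha'
            rw [areaAux_ned hu, areaAux_NE, areaAux_repD, areaAux_NNEE] at ha'
            simp only [area]
            omega
          rw [hr1 u j v hu]
          refine ⟨?_, ?_, ?_, ?_, Or.inr ⟨u, j, v, hu, rfl⟩⟩
          · exact isSchroeder_append (isSchroeder_append (isSchroeder_append
              (isSchroeder_append (isSchroeder_of_ned hu) isSchroeder_NDE)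
              (isSchroeder_repD j)) isSchroeder_NE) hv
          · show area _ = 1
            simp only [area, List.append_assoc, List.cons_append, List.nil_append]
            rw [areaAux_ned hu, areaAux_NDE, areaAux_repD, areaAux_NE]
            simp only [area] at hva
            omega
          · simp only [cnt_append, cnt_replicate, cnt_cons, cnt_nil] at hD ⊢
            simp at hD ⊢
            omega
          · simp only [cnt_append, cnt_replicate, cnt_cons, cnt_nil] at hN ⊢
            simp at hN ⊢
            omega
      · -- InjOn
        rintro g₁ ⟨_, _, _, _, hUF₁⟩ g₂ ⟨_, _, _, _, hUF₂⟩ heq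
        rcases hUF₁ with ⟨j₁, u₁, hu₁, rfl⟩ | ⟨u₁, j₁, v₁, hu₁, rfl⟩ <;>
          rcases hUF₂ with ⟨j₂, u₂, hu₂, rfl⟩ | ⟨u₂, j₂, v₂, hu₂, rfl⟩
        · -- A A
          rw [hr2 j₁ u₁ hu₁, hr2 j₂ u₂ hu₂] at heq
          simp only [List.append_assoc, List.cons_append, List.nil_append] at heq
          obtain ⟨hj, hx⟩ := repD_cancel j₁ j₂ _ _ heq
          simp only [List.cons.injEq, true_and] at hx
          have huu : u₁ = u₂ := append_cancel_right' hx
          rw [hj, huu]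
        · -- A B : contradiction
          exfalso
          rw [hr2 j₁ u₁ hu₁, hr1 u₂ j₂ v₂ hu₂] at heq
          have hfeq := congrArg (List.filter (fun s => s ≠ D)) heq
          simp only [List.filter_append, filter_repD, List.filter_cons] at hfeq
          rcases filter_ned hu₂ with h' | ⟨t, h'⟩ <;> rw [h'] at hfeq <;> simp at hfeq
        · -- B A : contradiction
          exfalso
          rw [hr1 u₁ j₁ v₁ hu₁, hr2 j₂ u₂ hu₂] at heq
          have hfeq := congrArg (List.filter (fun s => s ≠ D)) heq
          simp only [List.filter_append, filter_repD, List.filter_cons] at hfeq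
          rcases filter_ned hu₁ with h' | ⟨t, h'⟩ <;> rw [h'] at hfeq <;> simp at hfeq
        · -- B B
          rw [hr1 u₁ j₁ v₁ hu₁, hr1 u₂ j₂ v₂ hu₂] at heq
          simp only [List.append_assoc, List.cons_append, List.nil_append] at heq
          obtain ⟨huu, hx⟩ := ned_cancel hu₁ hu₂ _ _ heq
          simp only [List.cons.injEq, true_and] at hx
          obtain ⟨hj, hv⟩ := repD_cancel j₁ j₂ _ _ hx
          simp only [List.cons.injEq, true_and] at hv
          rw [huu, hj, hv]
      · -- SurjOn
        rintro g ⟨hs, ha, hD, hN, hLF⟩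
        rcases hLF with ⟨j, u, hu, rfl⟩ | ⟨u, j, v, hu, rfl⟩
        · refine ⟨List.replicate j D ++ [N,N,E,E] ++ u ++ [N,E,N,E],
            ⟨?_, ?_, ?_, ?_, Or.inl ⟨j, u, hu, rfl⟩⟩, hr2 j u hu⟩
          · exact isSchroeder_append (isSchroeder_append (isSchroeder_append
              (isSchroeder_repD j) isSchroeder_NNEE) (isSchroeder_of_ned hu))
              isSchroeder_NENE
          · show area _ = 1
            simp only [area, List.append_assoc, List.cons_append, List.nil_append]
            rw [areaAux_repD, areaAux_NNEE, areaAux_ned hu, areaAux_NE, areaAux_NE]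
            rfl
          · simp only [cnt_append, cnt_replicate, cnt_cons, cnt_nil] at hD ⊢
            simp at hD ⊢
            omega
          · simp only [cnt_append, cnt_replicate, cnt_cons, cnt_nil] at hN ⊢
            simp at hN ⊢
            omega
        · have hbal : cnt N (u ++ [N,D,E] ++ List.replicate j D ++ [N,E]) =
              cnt E (u ++ [N,D,E] ++ List.replicate j D ++ [N,E]) := by
            have hb := ned_balanced hu
            simp [cnt_append, cnt_replicate, cnt_cons, cnt_nil]
            omega
          have hv : IsSchroeder v := isSchroeder_suffix hs hbal
          have hva : area v = 0 := by
            have ha' := ha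
            simp only [area, List.append_assoc, List.cons_append, List.nil_append] at ha'
            rw [areaAux_ned hu, areaAux_NDE, areaAux_repD, areaAux_NE] at ha'
            simp only [area]
            omega
          refine ⟨u ++ [N,E] ++ List.replicate j D ++ [N,N,E,E] ++ v,
            ⟨?_, ?_, ?_, ?_, Or.inr ⟨u, j, v, hu, rfl⟩⟩, hr1 u j v hu⟩
          · exact isSchroeder_append (isSchroeder_append (isSchroeder_append
              (isSchroeder_append (isSchroeder_of_ned hu) isSchroeder_NE)
              (isSchroeder_repD j)) isSchroeder_NNEE) hv
          · show area _ = 1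
            simp only [area, List.append_assoc, List.cons_append, List.nil_append]
            rw [areaAux_ned hu, areaAux_NE, areaAux_repD, areaAux_NNEE]
            simp only [area] at hva
            omega
          · simp only [cnt_append, cnt_replicate, cnt_cons, cnt_nil] at hD ⊢
            simp at hD ⊢
            omega
          · simp only [cnt_append, cnt_replicate, cnt_cons, cnt_nil] at hN ⊢
            simp at hN ⊢
            omega
    · -- bounce part
      rintro g ⟨hs, ha, hD, hN, hUF⟩
      rcases hUF with ⟨j, u, hu, rfl⟩ | ⟨u, j, v, hu, rfl⟩
      · rw [hr2 j u hu]
        simp only [List.append_assoc, List.cons_append, List.nil_append]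
        simp only [bounce_repD, bounce_NNEE, bounce_ned_append hu, b1, b2]
        simp [cnt_append, cnt_cons, cnt_nil]
        omega
      · rw [hr1 u j v hu]
        simp only [List.append_assoc, List.cons_append, List.nil_append]
        simp only [bounce_ned_append hu, bounce_NE, bounce_NDE, bounce_repD, bounce_NNEE]
        have hm : cnt D (N::D::E::(List.replicate j D ++ N::E::v)) +
            cnt E (N::D::E::(List.replicate j D ++ N::E::v)) =
            cnt D (N::E::(List.replicate j D ++ N::N::E::E::v)) +
            cnt E (N::E::(List.replicate j D ++ N::N::E::E::v)) := by
          simp [cnt_cons, cnt_append, cnt_replicate, cnt_nil]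
          omega
        rw [hm]
        simp [cnt_cons, cnt_append, cnt_replicate, cnt_nil]
        omega
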